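/- Let X₁,…,X_C be matrices with k rows and n₁,…,n_C columns, X = [X₁,…,X_C] their horizontal concatenation with N = ∑ n_c columns, M_c the mean matrix of X_c, and M the mean matrix of X (with N columns, partitioned as [M^{(1)},…,M^{(C)}] matching the X_c). Define g(X) = ∑_{c=1}^C (‖X_c - M_c‖_F² - ‖M_c - M^{(c)}‖_F²) + ‖X‖_F². Then the gradient of (1/2)g with respect to X is 2X + M - 2[M₁,…,M_C]. -/

import Mathlib

/-- Frobenius inner product as a sum of entrywise products. -/
def frobInner {m n : Type*} [Fintype m] [Fintype n] (A B : Matrix m n ℝ) : ℝ :=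
  ∑ i, ∑ j, A i j * B i j

/-- Mean of the columns of the class-`c` block of `X`. -/
noncomputable def meanC {k C : ℕ} {n : Fin C → ℕ}
    (X : Matrix (Fin k) ((c : Fin C) × Fin (n c)) ℝ) (c : Fin C) (i : Fin k) : ℝ :=
  ((n c : ℝ))⁻¹ * ∑ j, X i ⟨c, j⟩

/-- Mean of all columns of `X`. -/
noncomputable def meanAll {k C : ℕ} {n : Fin C → ℕ}
    (X : Matrix (Fin k) ((c : Fin C) × Fin (n c)) ℝ) (i : Fin k) : ℝ :=
  (((∑ c, n c : ℕ) : ℝ))⁻¹ * ∑ p, X i p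

/-- The FDDL Fisher-based discriminative coefficient term g(X). -/
noncomputable def gFun {k C : ℕ} {n : Fin C → ℕ}
    (X : Matrix (Fin k) ((c : Fin C) × Fin (n c)) ℝ) : ℝ :=
  (∑ c, ((∑ j, ∑ i, (X i ⟨c, j⟩ - meanC X c i) ^ 2)
      - ∑ _j : Fin (n c), ∑ i, (meanC X c i - meanAll X i) ^ 2))
    + ∑ p, ∑ i, (X i p) ^ 2

/-- Sum over a sigma fintype as an iterated sum. -/
lemma sigma_sum_eq {C : ℕ} {n : Fin C → ℕ} (f : ((c : Fin C) × Fin (n c)) → ℝ) :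
    ∑ p, f p = ∑ c, ∑ j, f ⟨c, j⟩ := by
  rw [← Finset.univ_sigma_univ, Finset.sum_sigma]

lemma sum_col_eq {k C : ℕ} {n : Fin C → ℕ} (hn : ∀ c, 1 ≤ n c)
    (X : Matrix (Fin k) ((c : Fin C) × Fin (n c)) ℝ) (c : Fin C) (i : Fin k) :
    ∑ j, X i ⟨c, j⟩ = (n c : ℝ) * meanC X c i := by
  have h : (n c : ℝ) ≠ 0 := by
    have := hn c; positivity
  unfold meanC
  rw [← mul_assoc, mul_inv_cancel₀ h, one_mul]

lemma sum_all_eq {k C : ℕ} {n : Fin C → ℕ} (hn : ∀ c, 1 ≤ n c)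
    (X : Matrix (Fin k) ((c : Fin C) × Fin (n c)) ℝ) (i : Fin k) :
    ∑ c, ∑ j, X i ⟨c, j⟩ = ((∑ c, n c : ℕ) : ℝ) * meanAll X i := by
  unfold meanAll
  rcases Nat.eq_zero_or_pos (∑ c, n c) with h0 | hpos
  · haveI : IsEmpty (Fin C) := by
      constructor
      intro c
      have h1 := (Finset.sum_eq_zero_iff.mp h0) c (Finset.mem_univ c)
      have h2 := hn c
      omega
    simp [h0]
  · have h : ((∑ c, n c : ℕ) : ℝ) ≠ 0 := by positivity
    rw [← mul_assoc, mul_inv_cancel₀ h, one_mul, sigma_sum_eq]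

lemma sum_two_mul_sub {m : ℕ} (x h : Fin m → ℝ) (a b : ℝ)
    (hx : ∑ j, x j = (m : ℝ) * a) (hh : ∑ j, h j = (m : ℝ) * b) :
    ∑ j, 2 * (x j - a) * (h j - b) = 2 * (∑ j, x j * h j) - 2 * (m : ℝ) * a * b := by
  have e : ∀ j, 2 * (x j - a) * (h j - b)
      = 2 * (x j * h j) - (2 * b) * x j - (2 * a) * h j + 2 * a * b := fun j => by ring
  rw [Finset.sum_congr rfl fun j _ => e j, Finset.sum_add_distrib, Finset.sum_sub_distrib,
    Finset.sum_sub_distrib, ← Finset.mul_sum, ← Finset.mul_sum, ← Finset.mul_sum, hx, hh,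
    Finset.sum_const, Finset.card_univ, Fintype.card_fin, nsmul_eq_mul]
  ring

theorem grad_half_g (k C : ℕ) (n : Fin C → ℕ) (hn : ∀ c, 1 ≤ n c)
    (X : Matrix (Fin k) ((c : Fin C) × Fin (n c)) ℝ) :
    ∀ H : Matrix (Fin k) ((c : Fin C) × Fin (n c)) ℝ,
      HasDerivAt (fun t : ℝ => (1 / 2) * gFun (X + t • H))
        (frobInner (Matrix.of fun i p => 2 * X i p + meanAll X i - 2 * meanC X p.1 i) H) 0 := by
  intro H
  -- pointwise entries
  have hE : ∀ (i : Fin k) (p : (c : Fin C) × Fin (n c)),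
      HasDerivAt (fun t : ℝ => (X + t • H) i p) (H i p) 0 := by
    intro i p
    simpa [Matrix.add_apply, Matrix.smul_apply, smul_eq_mul] using
      (hasDerivAt_mul_const (H i p)).const_add (X i p)
  -- class means
  have hmC : ∀ (c : Fin C) (i : Fin k),
      HasDerivAt (fun t : ℝ => meanC (X + t • H) c i) (meanC H c i) 0 := by
    intro c i
    have h := (HasDerivAt.sum (u := Finset.univ) (fun j _ => hE i ⟨c, j⟩)).const_mul ((n c : ℝ)⁻¹)
    simpa [meanC] using h
  -- global mean
  have hmA : ∀ i : Fin k,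
      HasDerivAt (fun t : ℝ => meanAll (X + t • H) i) (meanAll H i) 0 := by
    intro i
    have h := (HasDerivAt.sum (u := Finset.univ) (fun p _ => hE i p)).const_mul (((∑ c, n c : ℕ) : ℝ)⁻¹)
    simpa [meanAll] using h
  -- the three pieces
  have h1 : ∀ c : Fin C,
      HasDerivAt (fun t : ℝ => ∑ j, ∑ i, ((X + t • H) i ⟨c, j⟩ - meanC (X + t • H) c i) ^ 2)
        (∑ j, ∑ i, 2 * (X i ⟨c, j⟩ - meanC X c i) * (H i ⟨c, j⟩ - meanC H c i)) 0 := by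
    intro c
    refine HasDerivAt.fun_sum fun j _ => HasDerivAt.fun_sum fun i _ => ?_
    simpa [pow_one] using ((hE i ⟨c, j⟩).fun_sub (hmC c i)).fun_pow 2
  have h2 : ∀ c : Fin C,
      HasDerivAt (fun t : ℝ =>
          ∑ _j : Fin (n c), ∑ i, (meanC (X + t • H) c i - meanAll (X + t • H) i) ^ 2)
        (∑ _j : Fin (n c), ∑ i,
          2 * (meanC X c i - meanAll X i) * (meanC H c i - meanAll H i)) 0 := by
    intro c
    refine HasDerivAt.fun_sum fun j _ => HasDerivAt.fun_sum fun i _ => ?_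
    simpa [pow_one] using ((hmC c i).fun_sub (hmA i)).fun_pow 2
  have h3 : HasDerivAt (fun t : ℝ => ∑ p, ∑ i, ((X + t • H) i p) ^ 2)
      (∑ p, ∑ i, 2 * X i p * H i p) 0 := by
    refine HasDerivAt.fun_sum fun p _ => HasDerivAt.fun_sum fun i _ => ?_
    simpa [pow_one] using (hE i p).fun_pow 2
  have key : HasDerivAt (fun t : ℝ => (1 / 2) * gFun (X + t • H))
      ((1 / 2) * ((∑ c, ((∑ j, ∑ i, 2 * (X i ⟨c, j⟩ - meanC X c i) * (H i ⟨c, j⟩ - meanC H c i))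
          - ∑ _j : Fin (n c), ∑ i,
              2 * (meanC X c i - meanAll X i) * (meanC H c i - meanAll H i)))
        + ∑ p, ∑ i, 2 * X i p * H i p)) 0 := by
    unfold gFun
    exact ((HasDerivAt.fun_sum fun c _ => (h1 c).sub (h2 c)).add h3).const_mul (1 / 2 : ℝ)
  -- value of the derivative
  have hval : (1 / 2 : ℝ) * ((∑ c, ((∑ j, ∑ i,
          2 * (X i ⟨c, j⟩ - meanC X c i) * (H i ⟨c, j⟩ - meanC H c i))
          - ∑ _j : Fin (n c), ∑ i,
              2 * (meanC X c i - meanAll X i) * (meanC H c i - meanAll H i)))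
        + ∑ p, ∑ i, 2 * X i p * H i p)
      = frobInner (Matrix.of fun i p => 2 * X i p + meanAll X i - 2 * meanC X p.1 i) H := by
    have hSX := sum_col_eq hn X
    have hSH := sum_col_eq hn H
    -- rewrite each piece as a double sum over c then i
    have hA : ∀ c : Fin C,
        ∑ j, ∑ i, 2 * (X i ⟨c, j⟩ - meanC X c i) * (H i ⟨c, j⟩ - meanC H c i)
          = ∑ i, (2 * (∑ j, X i ⟨c, j⟩ * H i ⟨c, j⟩)
              - 2 * (n c : ℝ) * meanC X c i * meanC H c i) := by
      intro c
      rw [Finset.sum_comm]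
      exact Finset.sum_congr rfl fun i _ =>
        sum_two_mul_sub (fun j => X i ⟨c, j⟩) (fun j => H i ⟨c, j⟩) _ _ (hSX c i) (hSH c i)
    have hB : ∀ c : Fin C,
        ∑ _j : Fin (n c), ∑ i,
            2 * (meanC X c i - meanAll X i) * (meanC H c i - meanAll H i)
          = ∑ i, (n c : ℝ) *
              (2 * (meanC X c i - meanAll X i) * (meanC H c i - meanAll H i)) := by
      intro c
      rw [Finset.sum_const, Finset.card_univ, Fintype.card_fin, nsmul_eq_mul, Finset.mul_sum]
    have hC3 : ∑ p, ∑ i, 2 * X i p * H i p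
        = ∑ c, ∑ i, 2 * (∑ j, X i ⟨c, j⟩ * H i ⟨c, j⟩) := by
      rw [sigma_sum_eq]
      refine Finset.sum_congr rfl fun c _ => ?_
      rw [Finset.sum_comm]
      refine Finset.sum_congr rfl fun i _ => ?_
      rw [Finset.mul_sum]
      exact Finset.sum_congr rfl fun j _ => by ring
    have hRHS : frobInner (Matrix.of fun i p => 2 * X i p + meanAll X i - 2 * meanC X p.1 i) H
        = ∑ c, ∑ i, (2 * (∑ j, X i ⟨c, j⟩ * H i ⟨c, j⟩)
            + (meanAll X i - 2 * meanC X c i) * ((n c : ℝ) * meanC H c i)) := by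
      unfold frobInner
      rw [Finset.sum_comm, sigma_sum_eq]
      refine Finset.sum_congr rfl fun c _ => ?_
      rw [Finset.sum_comm]
      refine Finset.sum_congr rfl fun i _ => ?_
      rw [← hSH c i, Finset.mul_sum, Finset.mul_sum, ← Finset.sum_add_distrib]
      refine Finset.sum_congr rfl fun j _ => ?_
      simp only [Matrix.of_apply]
      ring
    simp only [hA, hB]
    rw [hC3, hRHS, ← sub_eq_zero]
    have hsum : ∀ i : Fin k, ∑ c, (n c : ℝ) * meanC X c i
        = ((∑ c, n c : ℕ) : ℝ) * meanAll X i := by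
      intro i
      calc ∑ c, (n c : ℝ) * meanC X c i = ∑ c, ∑ j, X i ⟨c, j⟩ :=
            Finset.sum_congr rfl fun c _ => (hSX c i).symm
        _ = _ := sum_all_eq hn X i
    have comb : (1 / 2 : ℝ) * ((∑ c, ((∑ i, (2 * (∑ j, X i ⟨c, j⟩ * H i ⟨c, j⟩)
              - 2 * (n c : ℝ) * meanC X c i * meanC H c i))
            - ∑ i, (n c : ℝ) *
              (2 * (meanC X c i - meanAll X i) * (meanC H c i - meanAll H i))))
          + ∑ c, ∑ i, 2 * (∑ j, X i ⟨c, j⟩ * H i ⟨c, j⟩))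
        - ∑ c, ∑ i, (2 * (∑ j, X i ⟨c, j⟩ * H i ⟨c, j⟩)
            + (meanAll X i - 2 * meanC X c i) * ((n c : ℝ) * meanC H c i))
        = ∑ c, ∑ i, (n c : ℝ) * meanAll H i * (meanC X c i - meanAll X i) := by
      rw [← Finset.sum_add_distrib, Finset.mul_sum, ← Finset.sum_sub_distrib]
      refine Finset.sum_congr rfl fun c _ => ?_
      rw [← Finset.sum_sub_distrib, ← Finset.sum_add_distrib, Finset.mul_sum,
        ← Finset.sum_sub_distrib]
      exact Finset.sum_congr rfl fun i _ => by ring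
    rw [comb, Finset.sum_comm]
    refine Finset.sum_eq_zero fun i _ => ?_
    calc ∑ c, (n c : ℝ) * meanAll H i * (meanC X c i - meanAll X i)
        = meanAll H i * ∑ c, ((n c : ℝ) * meanC X c i - (n c : ℝ) * meanAll X i) := by
          rw [Finset.mul_sum]
          exact Finset.sum_congr rfl fun c _ => by ring
      _ = meanAll H i * ((∑ c, (n c : ℝ) * meanC X c i)
            - ((∑ c, n c : ℕ) : ℝ) * meanAll X i) := by
          rw [Finset.sum_sub_distrib, ← Finset.sum_mul, Nat.cast_sum]
      _ = 0 := by rw [hsum i]; ring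
  rwa [hval] at key
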